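/- Let P = [a]×[b]. The antichain cardinality statistic I ↦ #max(I) on J(P) can be written as ab/(a+b) plus an ℝ-linear combination of the signed toggleability statistics T_{i,j}; consequently, the average of #max(I) along any rowmotion orbit is ab/(a+b). -/

import Mathlib

open scoped Classical
open Finset

variable {P : Type*} [Fintype P] [PartialOrder P]

/-- `I` is an order ideal (downward-closed subset) of the finite poset `P`. -/
def IsIdeal (I : Finset P) : Prop := ∀ ⦃x y : P⦄, x ≤ y → y ∈ I → x ∈ I

/-- `p` is a minimal element of the complement `P \ I`. -/
def CanTogIn (I : Finset P) (p : P) : Prop := p ∉ I ∧ ∀ q, q < p → q ∈ I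

/-- `p` is a maximal element of `I`. -/
def CanTogOut (I : Finset P) (p : P) : Prop := p ∈ I ∧ ∀ q, p < q → q ∉ I

/-- Rowmotion: the order ideal generated by the minimal elements of `P \ I`. -/
noncomputable def rowmotion (I : Finset P) : Finset P :=
  univ.filter fun x => ∃ y, CanTogIn I y ∧ x ≤ y

/-- Toggleability statistic `T⁺_p`. -/
noncomputable def Tin (p : P) (I : Finset P) : ℝ := if CanTogIn I p then 1 else 0

/-- Toggleability statistic `T⁻_p`. -/
noncomputable def Tout (p : P) (I : Finset P) : ℝ := if CanTogOut I p then 1 else 0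

/-- Signed toggleability statistic `T_p = T⁺_p - T⁻_p`. -/
noncomputable def Tsgn (p : P) (I : Finset P) : ℝ := Tin p I - Tout p I

namespace RectAux

variable {a b : ℕ}

/-- membership in natural coordinates; out-of-range is `False`. -/
def Mem (I : Finset (Fin a × Fin b)) (x y : ℕ) : Prop :=
  ∃ (hx : x < a) (hy : y < b), ((⟨x, hx⟩, ⟨y, hy⟩) : Fin a × Fin b) ∈ I

lemma mem_iff_Mem {I : Finset (Fin a × Fin b)} {q : Fin a × Fin b} :
    q ∈ I ↔ Mem I q.1.1 q.2.1 := by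
  constructor
  · intro h; exact ⟨q.1.2, q.2.2, by simpa using h⟩
  · rintro ⟨hx, hy, h⟩; simpa using h

lemma Mem.lt_a {I : Finset (Fin a × Fin b)} {x y} (h : Mem I x y) : x < a := by
  obtain ⟨hx, -, -⟩ := h; exact hx

lemma Mem.lt_b {I : Finset (Fin a × Fin b)} {x y} (h : Mem I x y) : y < b := by
  obtain ⟨-, hy, -⟩ := h; exact hy

lemma le_val {q r : Fin a × Fin b} : q ≤ r ↔ q.1.1 ≤ r.1.1 ∧ q.2.1 ≤ r.2.1 :=
  Iff.rfl

lemma lt_val {q r : Fin a × Fin b} :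
    q < r ↔ q.1.1 ≤ r.1.1 ∧ q.2.1 ≤ r.2.1 ∧ ¬(q.1.1 = r.1.1 ∧ q.2.1 = r.2.1) := by
  rw [lt_iff_le_and_ne, le_val]
  have : q ≠ r ↔ ¬(q.1.1 = r.1.1 ∧ q.2.1 = r.2.1) := by
    simp only [ne_eq, Prod.ext_iff, Fin.ext_iff]
  tauto

lemma Mem.mono {I : Finset (Fin a × Fin b)} (hI : IsIdeal I) {x y x' y' : ℕ}
    (h : Mem I x y) (hx' : x' ≤ x) (hy' : y' ≤ y) : Mem I x' y' := by
  obtain ⟨hx, hy, h⟩ := h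
  exact ⟨lt_of_le_of_lt hx' hx, lt_of_le_of_lt hy' hy,
    hI (le_val.2 ⟨hx', hy'⟩) h⟩

lemma togOut_iff {I : Finset (Fin a × Fin b)} (hI : IsIdeal I) (q : Fin a × Fin b) :
    CanTogOut I q ↔ Mem I q.1.1 q.2.1 ∧ ¬Mem I (q.1.1 + 1) q.2.1 ∧ ¬Mem I q.1.1 (q.2.1 + 1) := by
  constructor
  · rintro ⟨hq, hm⟩
    refine ⟨mem_iff_Mem.1 hq, ?_, ?_⟩
    · rintro ⟨hx, hy, h⟩
      exact hm _ (lt_val.2 (by simp)) h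
    · rintro ⟨hx, hy, h⟩
      exact hm _ (lt_val.2 (by simp)) h
  · rintro ⟨hq, h1, h2⟩
    refine ⟨mem_iff_Mem.2 hq, ?_⟩
    intro r hr hrI
    rw [lt_val] at hr
    have hrm := mem_iff_Mem.1 hrI
    rcases Nat.lt_or_ge q.1.1 r.1.1 with h | h
    · exact h1 (hrm.mono hI h hr.2.1)
    · have : q.1.1 = r.1.1 := le_antisymm hr.1 h
      have : q.2.1 < r.2.1 := by omega
      exact h2 (hrm.mono hI hr.1 this)

lemma togIn_iff {I : Finset (Fin a × Fin b)} (hI : IsIdeal I) (q : Fin a × Fin b) :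
    CanTogIn I q ↔ ¬Mem I q.1.1 q.2.1 ∧ (q.1.1 = 0 ∨ Mem I (q.1.1 - 1) q.2.1) ∧
      (q.2.1 = 0 ∨ Mem I q.1.1 (q.2.1 - 1)) := by
  constructor
  · rintro ⟨hq, hmm⟩
    refine ⟨fun h => hq (mem_iff_Mem.2 h), ?_, ?_⟩
    · rcases Nat.eq_zero_or_pos q.1.1 with h | h
      · exact Or.inl h
      · refine Or.inr (mem_iff_Mem.1 (hmm (⟨q.1.1 - 1, by omega⟩, q.2) (lt_val.2 (by simp; omega))))
    · rcases Nat.eq_zero_or_pos q.2.1 with h | h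
      · exact Or.inl h
      · refine Or.inr (mem_iff_Mem.1 (hmm (q.1, ⟨q.2.1 - 1, by omega⟩) (lt_val.2 (by simp; omega))))
  · rintro ⟨hq, h1, h2⟩
    refine ⟨fun h => hq (mem_iff_Mem.1 h), ?_⟩
    intro r hr
    rw [lt_val] at hr
    rcases Nat.lt_or_ge r.1.1 q.1.1 with h | h
    · rcases h1 with h1 | h1
      · omega
      · exact mem_iff_Mem.2 (h1.mono hI (by omega) hr.2.1)
    · have hx : r.1.1 = q.1.1 := le_antisymm hr.1 h
      have hy : r.2.1 < q.2.1 := by omega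
      rcases h2 with h2 | h2
      · omega
      · exact mem_iff_Mem.2 (h2.mono hI (by omega) (by omega))

end RectAux
namespace RectAux2
open RectAux

variable {a b : ℕ}

noncomputable def cw (a b : ℕ) (q : Fin a × Fin b) : ℝ :=
  (b : ℝ) * q.1.1 + (a : ℝ) * q.2.1 - (a : ℝ) * (b : ℝ)

noncomputable def fS (a b : ℕ) (I : Finset (Fin a × Fin b)) : ℝ :=
  ∑ q, ((((a : ℝ) + (b : ℝ)) + cw a b q) * Tout q I - cw a b q * Tin q I)

lemma isIdeal_erase {I : Finset (Fin a × Fin b)} (hI : IsIdeal I) {p : Fin a × Fin b}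
    (hmax : ∀ r ∈ I, ¬ p < r) : IsIdeal (I.erase p) := by
  intro x y hxy hy
  rcases Finset.mem_erase.1 hy with ⟨hyne, hyI⟩
  refine Finset.mem_erase.2 ⟨?_, hI hxy hyI⟩
  rintro rfl
  exact hmax y hyI (lt_of_le_of_ne hxy hyne.symm)


open Finset in
lemma step {I : Finset (Fin a × Fin b)} (hI : IsIdeal I) {p : Fin a × Fin b}
    (hp : p ∈ I) (hmax : ∀ r ∈ I, ¬ p < r) {i j : ℕ}
    (hip : p.1.1 = i) (hjp : p.2.1 = j) :
    fS a b I = fS a b (I.erase p) := by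
  classical
  have hia : i < a := hip ▸ p.1.2
  have hjb : j < b := hjp ▸ p.2.2
  have hqp_iff : ∀ q : Fin a × Fin b, q = p ↔ (q.1.1 = i ∧ q.2.1 = j) := by
    intro q
    rw [Prod.ext_iff]
    simp [Fin.ext_iff, hip, hjp]
  have hMij : Mem I i j := by
    refine ⟨hia, hjb, ?_⟩
    have h : ((⟨i, hia⟩, ⟨j, hjb⟩) : Fin a × Fin b) = p := (hqp_iff _).2 ⟨rfl, rfl⟩
    rw [h]; exact hp
  have hOut : CanTogOut I p := ⟨hp, fun r hr hrI => hmax r hrI hr⟩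
  have hnr : ¬ Mem I (i + 1) j := by
    have h := ((togOut_iff hI p).1 hOut).2.1
    rwa [hip, hjp] at h
  have hnu : ¬ Mem I i (j + 1) := by
    have h := ((togOut_iff hI p).1 hOut).2.2
    rwa [hip, hjp] at h
  set I' := I.erase p with hI'def
  have hI' : IsIdeal I' := isIdeal_erase hI hmax
  have hMem' : ∀ x y : ℕ, Mem I' x y ↔ (Mem I x y ∧ ¬(x = i ∧ y = j)) := by
    intro x y
    constructor
    · rintro ⟨hx, hy, h⟩
      rcases Finset.mem_erase.1 h with ⟨hne, hmem⟩
      refine ⟨⟨hx, hy, hmem⟩, ?_⟩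
      rintro ⟨rfl, rfl⟩
      exact hne ((hqp_iff _).2 ⟨rfl, rfl⟩)
    · rintro ⟨⟨hx, hy, h⟩, hne⟩
      refine ⟨hx, hy, Finset.mem_erase.2 ⟨?_, h⟩⟩
      intro hq
      rcases (hqp_iff _).1 hq with ⟨h1, h2⟩
      exact hne ⟨h1, h2⟩
  have key : ∀ q : Fin a × Fin b,
      ((((a : ℝ) + b) + cw a b q) * Tout q I - cw a b q * Tin q I)
        - ((((a : ℝ) + b) + cw a b q) * Tout q I' - cw a b q * Tin q I')
      = (if q = p then ((a : ℝ) + b) + 2 * cw a b p else 0)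
        - (if q.1.1 + 1 = i ∧ q.2.1 = j then
            (((a : ℝ) + b) + cw a b q) * (if Mem I (i-1) (j+1) then 0 else 1) else 0)
        - (if q.1.1 = i ∧ q.2.1 + 1 = j then
            (((a : ℝ) + b) + cw a b q) * (if Mem I (i+1) (j-1) then 0 else 1) else 0)
        - (if q.1.1 = i + 1 ∧ q.2.1 = j then
            cw a b q * (if 0 < j then (if Mem I (i+1) (j-1) then 1 else 0) else 1) else 0)
        - (if q.1.1 = i ∧ q.2.1 = j + 1 then
            cw a b q * (if 0 < i then (if Mem I (i-1) (j+1) then 1 else 0) else 1) else 0) := by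
    intro q
    by_cases hq1 : q = p
    · subst hq1
      have t1 : Tout q I = 1 := if_pos hOut
      have t2 : Tin q I = 0 := if_neg (fun h => h.1 hp)
      have t3 : Tout q I' = 0 := if_neg (fun h => (Finset.mem_erase.1 h.1).1 rfl)
      have t4 : Tin q I' = 1 := if_pos ⟨fun h => (Finset.mem_erase.1 h).1 rfl,
        fun r hr => Finset.mem_erase.2 ⟨ne_of_lt hr, hI (le_of_lt hr) hp⟩⟩
      rw [t1, t2, t3, t4, if_pos rfl,
        if_neg (show ¬(q.1.1 + 1 = i ∧ q.2.1 = j) by rw [hip, hjp]; omega),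
        if_neg (show ¬(q.1.1 = i ∧ q.2.1 + 1 = j) by rw [hip, hjp]; omega),
        if_neg (show ¬(q.1.1 = i + 1 ∧ q.2.1 = j) by rw [hip, hjp]; omega),
        if_neg (show ¬(q.1.1 = i ∧ q.2.1 = j + 1) by rw [hip, hjp]; omega)]
      ring
    · by_cases hq2 : q.1.1 + 1 = i ∧ q.2.1 = j
      · obtain ⟨e1, e2⟩ := hq2
        have hMq : Mem I q.1.1 q.2.1 := hMij.mono hI (by omega) (by omega)
        have hqI : q ∈ I := mem_iff_Mem.2 hMq
        have hqne : q ≠ p := hq1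
        have t2 : Tin q I = 0 := if_neg (fun h => h.1 hqI)
        have t4 : Tin q I' = 0 := if_neg (fun h => h.1 (Finset.mem_erase.2 ⟨hqne, hqI⟩))
        have t1 : Tout q I = 0 := by
          refine if_neg (fun h => ?_)
          have h2 := ((togOut_iff hI q).1 h).2.1
          rw [e1, e2] at h2
          exact h2 hMij
        have t3 : Tout q I' = (if Mem I (i-1) (j+1) then 0 else 1) := by
          by_cases hM1 : Mem I (i-1) (j+1)
          · rw [if_pos hM1]
            refine if_neg (fun h => ?_)
            have h2 := ((togOut_iff hI' q).1 h).2.2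
            refine h2 ((hMem' _ _).2 ⟨?_, by omega⟩)
            rw [show q.1.1 = i - 1 by omega, show q.2.1 + 1 = j + 1 by omega]
            exact hM1
          · rw [if_neg hM1]
            refine if_pos ((togOut_iff hI' q).2 ⟨(hMem' _ _).2 ⟨hMq, by omega⟩, ?_, ?_⟩)
            · rw [hMem']
              rintro ⟨-, hne⟩
              exact hne ⟨e1, e2⟩
            · rw [hMem']
              rintro ⟨h, -⟩
              rw [show q.1.1 = i - 1 by omega, show q.2.1 + 1 = j + 1 by omega] at h
              exact hM1 h
        rw [t1, t2, t3, t4, if_neg hq1, if_pos (show q.1.1 + 1 = i ∧ q.2.1 = j from ⟨e1, e2⟩),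
          if_neg (show ¬(q.1.1 = i ∧ q.2.1 + 1 = j) by omega),
          if_neg (show ¬(q.1.1 = i + 1 ∧ q.2.1 = j) by omega),
          if_neg (show ¬(q.1.1 = i ∧ q.2.1 = j + 1) by omega)]
        ring
      · by_cases hq3 : q.1.1 = i ∧ q.2.1 + 1 = j
        · obtain ⟨e1, e2⟩ := hq3
          have hMq : Mem I q.1.1 q.2.1 := hMij.mono hI (by omega) (by omega)
          have hqI : q ∈ I := mem_iff_Mem.2 hMq
          have hqne : q ≠ p := hq1
          have t2 : Tin q I = 0 := if_neg (fun h => h.1 hqI)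
          have t4 : Tin q I' = 0 := if_neg (fun h => h.1 (Finset.mem_erase.2 ⟨hqne, hqI⟩))
          have t1 : Tout q I = 0 := by
            refine if_neg (fun h => ?_)
            have h2 := ((togOut_iff hI q).1 h).2.2
            rw [e1, e2] at h2
            exact h2 hMij
          have t3 : Tout q I' = (if Mem I (i+1) (j-1) then 0 else 1) := by
            by_cases hM2 : Mem I (i+1) (j-1)
            · rw [if_pos hM2]
              refine if_neg (fun h => ?_)
              have h2 := ((togOut_iff hI' q).1 h).2.1
              refine h2 ((hMem' _ _).2 ⟨?_, by omega⟩)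
              rw [show q.1.1 + 1 = i + 1 by omega, show q.2.1 = j - 1 by omega]
              exact hM2
            · rw [if_neg hM2]
              refine if_pos ((togOut_iff hI' q).2 ⟨(hMem' _ _).2 ⟨hMq, by omega⟩, ?_, ?_⟩)
              · rw [hMem']
                rintro ⟨h, -⟩
                rw [show q.1.1 + 1 = i + 1 by omega, show q.2.1 = j - 1 by omega] at h
                exact hM2 h
              · rw [hMem']
                rintro ⟨-, hne⟩
                exact hne ⟨e1, e2⟩
          rw [t1, t2, t3, t4, if_neg hq1,
            if_neg (show ¬(q.1.1 + 1 = i ∧ q.2.1 = j) by omega),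
            if_pos (show q.1.1 = i ∧ q.2.1 + 1 = j from ⟨e1, e2⟩),
            if_neg (show ¬(q.1.1 = i + 1 ∧ q.2.1 = j) by omega),
            if_neg (show ¬(q.1.1 = i ∧ q.2.1 = j + 1) by omega)]
          ring
        · by_cases hq4 : q.1.1 = i + 1 ∧ q.2.1 = j
          · obtain ⟨e1, e2⟩ := hq4
            have hqnotI : q ∉ I := fun h => by
              have hm := mem_iff_Mem.1 h
              rw [e1, e2] at hm
              exact hnr hm
            have t1 : Tout q I = 0 := if_neg (fun h => hqnotI h.1)
            have t3 : Tout q I' = 0 := if_neg (fun h => hqnotI (Finset.mem_erase.1 h.1).2)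
            have hplt : p < q := by
              rw [lt_val, hip, hjp]
              omega
            have t4 : Tin q I' = 0 :=
              if_neg (fun h => (Finset.mem_erase.1 (h.2 p hplt)).1 rfl)
            have t2 : Tin q I = (if 0 < j then (if Mem I (i+1) (j-1) then 1 else 0) else 1) := by
              by_cases hj0 : 0 < j
              · rw [if_pos hj0]
                by_cases hM2 : Mem I (i+1) (j-1)
                · rw [if_pos hM2]
                  refine if_pos ((togIn_iff hI q).2 ⟨?_, ?_, ?_⟩)
                  · rw [e1, e2]; exact hnr
                  · right; rw [show q.1.1 - 1 = i by omega, e2]; exact hMij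
                  · right; rw [e1, show q.2.1 - 1 = j - 1 by omega]; exact hM2
                · rw [if_neg hM2]
                  refine if_neg (fun h => ?_)
                  rcases ((togIn_iff hI q).1 h).2.2 with h' | h'
                  · omega
                  · rw [e1, show q.2.1 - 1 = j - 1 by omega] at h'
                    exact hM2 h'
              · rw [if_neg hj0]
                refine if_pos ((togIn_iff hI q).2 ⟨?_, ?_, ?_⟩)
                · rw [e1, e2]; exact hnr
                · right; rw [show q.1.1 - 1 = i by omega, e2]; exact hMij
                · left; omega
            rw [t1, t2, t3, t4, if_neg hq1,
              if_neg (show ¬(q.1.1 + 1 = i ∧ q.2.1 = j) by omega),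
              if_neg (show ¬(q.1.1 = i ∧ q.2.1 + 1 = j) by omega),
              if_pos (show q.1.1 = i + 1 ∧ q.2.1 = j from ⟨e1, e2⟩),
              if_neg (show ¬(q.1.1 = i ∧ q.2.1 = j + 1) by omega)]
            ring
          · by_cases hq5 : q.1.1 = i ∧ q.2.1 = j + 1
            · obtain ⟨e1, e2⟩ := hq5
              have hqnotI : q ∉ I := fun h => by
                have hm := mem_iff_Mem.1 h
                rw [e1, e2] at hm
                exact hnu hm
              have t1 : Tout q I = 0 := if_neg (fun h => hqnotI h.1)
              have t3 : Tout q I' = 0 := if_neg (fun h => hqnotI (Finset.mem_erase.1 h.1).2)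
              have hplt : p < q := by
                rw [lt_val, hip, hjp]
                omega
              have t4 : Tin q I' = 0 :=
                if_neg (fun h => (Finset.mem_erase.1 (h.2 p hplt)).1 rfl)
              have t2 : Tin q I = (if 0 < i then (if Mem I (i-1) (j+1) then 1 else 0) else 1) := by
                by_cases hi0 : 0 < i
                · rw [if_pos hi0]
                  by_cases hM1 : Mem I (i-1) (j+1)
                  · rw [if_pos hM1]
                    refine if_pos ((togIn_iff hI q).2 ⟨?_, ?_, ?_⟩)
                    · rw [e1, e2]; exact hnu
                    · right; rw [show q.1.1 - 1 = i - 1 by omega, e2]; exact hM1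
                    · right; rw [e1, show q.2.1 - 1 = j by omega]; exact hMij
                  · rw [if_neg hM1]
                    refine if_neg (fun h => ?_)
                    rcases ((togIn_iff hI q).1 h).2.1 with h' | h'
                    · omega
                    · rw [show q.1.1 - 1 = i - 1 by omega, e2] at h'
                      exact hM1 h'
                · rw [if_neg hi0]
                  refine if_pos ((togIn_iff hI q).2 ⟨?_, ?_, ?_⟩)
                  · rw [e1, e2]; exact hnu
                  · left; omega
                  · right; rw [e1, show q.2.1 - 1 = j by omega]; exact hMij
              rw [t1, t2, t3, t4, if_neg hq1,
                if_neg (show ¬(q.1.1 + 1 = i ∧ q.2.1 = j) by omega),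
                if_neg (show ¬(q.1.1 = i ∧ q.2.1 + 1 = j) by omega),
                if_neg (show ¬(q.1.1 = i + 1 ∧ q.2.1 = j) by omega),
                if_pos (show q.1.1 = i ∧ q.2.1 = j + 1 from ⟨e1, e2⟩)]
              ring
            · -- generic case: nothing changes
              have n0 : ¬(q.1.1 = i ∧ q.2.1 = j) := fun h => hq1 ((hqp_iff q).2 h)
              have eqOut : CanTogOut I q ↔ CanTogOut I' q := by
                rw [togOut_iff hI, togOut_iff hI', hMem', hMem', hMem']
                constructor
                · rintro ⟨h1, h2, h3⟩
                  exact ⟨⟨h1, n0⟩, fun h => h2 h.1, fun h => h3 h.1⟩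
                · rintro ⟨⟨h1, -⟩, h2, h3⟩
                  exact ⟨h1, fun h => h2 ⟨h, hq2⟩, fun h => h3 ⟨h, hq3⟩⟩
              have eqIn : CanTogIn I q ↔ CanTogIn I' q := by
                rw [togIn_iff hI, togIn_iff hI', hMem', hMem', hMem']
                have n4 : q.1.1 = 0 ∨ ¬(q.1.1 - 1 = i ∧ q.2.1 = j) := by omega
                have n5 : q.2.1 = 0 ∨ ¬(q.1.1 = i ∧ q.2.1 - 1 = j) := by omega
                constructor
                · rintro ⟨h1, h2, h3⟩
                  refine ⟨fun h => h1 h.1, ?_, ?_⟩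
                  · rcases h2 with h2 | h2
                    · exact Or.inl h2
                    · rcases n4 with n4 | n4
                      · exact Or.inl n4
                      · exact Or.inr ⟨h2, n4⟩
                  · rcases h3 with h3 | h3
                    · exact Or.inl h3
                    · rcases n5 with n5 | n5
                      · exact Or.inl n5
                      · exact Or.inr ⟨h3, n5⟩
                · rintro ⟨h1, h2, h3⟩
                  refine ⟨fun h => h1 ⟨h, n0⟩, ?_, ?_⟩
                  · rcases h2 with h2 | h2
                    · exact Or.inl h2
                    · exact Or.inr h2.1
                  · rcases h3 with h3 | h3
                    · exact Or.inl h3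
                    · exact Or.inr h3.1
              have tOut : Tout q I = Tout q I' := by
                rw [Tout, Tout, if_congr eqOut rfl rfl]
              have tIn : Tin q I = Tin q I' := by
                rw [Tin, Tin, if_congr eqIn rfl rfl]
              rw [tOut, tIn, if_neg hq1, if_neg hq2, if_neg hq3, if_neg hq4, if_neg hq5]
              ring
  have hdiff : fS a b I - fS a b I' = 0 := by
    rw [fS, fS, ← Finset.sum_sub_distrib,
      Finset.sum_congr rfl (fun q _ => key q),
      Finset.sum_sub_distrib, Finset.sum_sub_distrib, Finset.sum_sub_distrib,
      Finset.sum_sub_distrib]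
    have S1 : (∑ q : Fin a × Fin b, if q = p then ((a:ℝ)+b) + 2 * cw a b p else 0)
        = ((a:ℝ)+b) + 2 * ((b:ℝ)*i + (a:ℝ)*j - (a:ℝ)*b) := by
      rw [Finset.sum_ite_eq' univ p, if_pos (Finset.mem_univ p)]
      simp only [cw, hip, hjp]
    have S2 : (∑ q : Fin a × Fin b, if q.1.1 + 1 = i ∧ q.2.1 = j then
          (((a:ℝ)+b) + cw a b q) * (if Mem I (i-1) (j+1) then 0 else 1) else 0)
        = (if 0 < i then (((a:ℝ)+b) + ((b:ℝ)*((i:ℝ)-1) + (a:ℝ)*j - (a:ℝ)*b))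
            * (if Mem I (i-1) (j+1) then 0 else 1) else 0) := by
      by_cases hi0 : 0 < i
      · rw [if_pos hi0]
        have ht : ∀ q : Fin a × Fin b, (q.1.1 + 1 = i ∧ q.2.1 = j)
            ↔ q = ((⟨i-1, by omega⟩ : Fin a), (⟨j, hjb⟩ : Fin b)) := by
          intro q
          rw [Prod.ext_iff]
          simp only [Fin.ext_iff, Fin.val_mk]
          try omega
        rw [Finset.sum_congr rfl (fun q _ => if_congr (ht q) rfl rfl),
          Finset.sum_ite_eq' univ _ _, if_pos (Finset.mem_univ _)]
        have hc : (((i-1 : ℕ) : ℝ)) = (i:ℝ) - 1 := by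
          have : (1:ℕ) ≤ i := hi0
          push_cast [this]
          ring
        simp only [cw]
        rw [show (((⟨i-1, by omega⟩ : Fin a) : ℕ) : ℝ) = ((i-1 : ℕ) : ℝ) from rfl, hc]
      · rw [if_neg hi0]
        exact Finset.sum_eq_zero fun q _ => if_neg (by omega)
    have S3 : (∑ q : Fin a × Fin b, if q.1.1 = i ∧ q.2.1 + 1 = j then
          (((a:ℝ)+b) + cw a b q) * (if Mem I (i+1) (j-1) then 0 else 1) else 0)
        = (if 0 < j then (((a:ℝ)+b) + ((b:ℝ)*i + (a:ℝ)*((j:ℝ)-1) - (a:ℝ)*b))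
            * (if Mem I (i+1) (j-1) then 0 else 1) else 0) := by
      by_cases hj0 : 0 < j
      · rw [if_pos hj0]
        have ht : ∀ q : Fin a × Fin b, (q.1.1 = i ∧ q.2.1 + 1 = j)
            ↔ q = ((⟨i, hia⟩ : Fin a), (⟨j-1, by omega⟩ : Fin b)) := by
          intro q
          rw [Prod.ext_iff]
          simp only [Fin.ext_iff, Fin.val_mk]
          try omega
        rw [Finset.sum_congr rfl (fun q _ => if_congr (ht q) rfl rfl),
          Finset.sum_ite_eq' univ _ _, if_pos (Finset.mem_univ _)]
        have hc : (((j-1 : ℕ) : ℝ)) = (j:ℝ) - 1 := by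
          have : (1:ℕ) ≤ j := hj0
          push_cast [this]
          ring
        simp only [cw]
        rw [show (((⟨j-1, by omega⟩ : Fin b) : ℕ) : ℝ) = ((j-1 : ℕ) : ℝ) from rfl, hc]
      · rw [if_neg hj0]
        exact Finset.sum_eq_zero fun q _ => if_neg (by omega)
    have S4 : (∑ q : Fin a × Fin b, if q.1.1 = i + 1 ∧ q.2.1 = j then
          cw a b q * (if 0 < j then (if Mem I (i+1) (j-1) then 1 else 0) else 1) else 0)
        = (if i + 1 < a then ((b:ℝ)*((i:ℝ)+1) + (a:ℝ)*j - (a:ℝ)*b)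
            * (if 0 < j then (if Mem I (i+1) (j-1) then 1 else 0) else 1) else 0) := by
      by_cases hA : i + 1 < a
      · rw [if_pos hA]
        have ht : ∀ q : Fin a × Fin b, (q.1.1 = i + 1 ∧ q.2.1 = j)
            ↔ q = ((⟨i+1, hA⟩ : Fin a), (⟨j, hjb⟩ : Fin b)) := by
          intro q
          rw [Prod.ext_iff]
          simp only [Fin.ext_iff, Fin.val_mk]
          try omega
        rw [Finset.sum_congr rfl (fun q _ => if_congr (ht q) rfl rfl),
          Finset.sum_ite_eq' univ _ _, if_pos (Finset.mem_univ _)]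
        simp only [cw]
        push_cast
        try ring
      · rw [if_neg hA]
        refine Finset.sum_eq_zero fun q _ => if_neg ?_
        rintro ⟨h1, -⟩
        have := q.1.2
        omega
    have S5 : (∑ q : Fin a × Fin b, if q.1.1 = i ∧ q.2.1 = j + 1 then
          cw a b q * (if 0 < i then (if Mem I (i-1) (j+1) then 1 else 0) else 1) else 0)
        = (if j + 1 < b then ((b:ℝ)*i + (a:ℝ)*((j:ℝ)+1) - (a:ℝ)*b)
            * (if 0 < i then (if Mem I (i-1) (j+1) then 1 else 0) else 1) else 0) := by
      by_cases hB : j + 1 < b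
      · rw [if_pos hB]
        have ht : ∀ q : Fin a × Fin b, (q.1.1 = i ∧ q.2.1 = j + 1)
            ↔ q = ((⟨i, hia⟩ : Fin a), (⟨j+1, hB⟩ : Fin b)) := by
          intro q
          rw [Prod.ext_iff]
          simp only [Fin.ext_iff, Fin.val_mk]
          try omega
        rw [Finset.sum_congr rfl (fun q _ => if_congr (ht q) rfl rfl),
          Finset.sum_ite_eq' univ _ _, if_pos (Finset.mem_univ _)]
        simp only [cw]
        push_cast
        try ring
      · rw [if_neg hB]
        refine Finset.sum_eq_zero fun q _ => if_neg ?_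
        rintro ⟨-, h2⟩
        have := q.2.2
        omega
    rw [S1, S2, S3, S4, S5]
    have hM1b : Mem I (i-1) (j+1) → j + 1 < b := fun h => h.lt_b
    have hM2a : Mem I (i+1) (j-1) → i + 1 < a := fun h => h.lt_a
    by_cases h1 : Mem I (i-1) (j+1) <;> by_cases h2 : Mem I (i+1) (j-1) <;>
      by_cases hi0 : 0 < i <;> by_cases hj0 : 0 < j <;>
      by_cases hA : i + 1 < a <;> by_cases hB : j + 1 < b <;>
      simp only [h1, h2, hi0, hj0, hA, hB, if_true, if_false] <;>
      first
        | exact absurd (hM1b h1) hB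
        | exact absurd (hM2a h2) hA
        | (try rw [show ((b:ℝ)) = (j:ℝ) + 1 by exact_mod_cast (by omega : b = j + 1)]
           try rw [show ((a:ℝ)) = (i:ℝ) + 1 by exact_mod_cast (by omega : a = i + 1)]
           try rw [show ((i:ℝ)) = 0 by exact_mod_cast (by omega : i = 0)]
           try rw [show ((j:ℝ)) = 0 by exact_mod_cast (by omega : j = 0)]
           ring)
  linarith [hdiff]

lemma fS_empty (ha : 0 < a) (hb : 0 < b) : fS a b (∅ : Finset (Fin a × Fin b)) = (a:ℝ) * b := by
  classical
  set z : Fin a × Fin b := (⟨0, ha⟩, ⟨0, hb⟩) with hz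
  have hin : ∀ q : Fin a × Fin b, CanTogIn (∅ : Finset (Fin a × Fin b)) q ↔ q = z := by
    intro q
    constructor
    · rintro ⟨-, h⟩
      by_contra hne
      have hlt : z < q := by
        refine lt_of_le_of_ne (le_val.2 ⟨?_, ?_⟩) (Ne.symm hne) <;> simp [hz]
      simpa using h z hlt
    · rintro rfl
      refine ⟨by simp, fun r hr => absurd hr ?_⟩
      rw [lt_val]
      have hz1 : z.1.1 = 0 := rfl
      have hz2 : z.2.1 = 0 := rfl
      omega
  have hout : ∀ q : Fin a × Fin b, Tout q (∅ : Finset (Fin a × Fin b)) = 0 :=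
    fun q => if_neg (fun h => by simpa using h.1)
  have hterm : ∀ q : Fin a × Fin b,
      ((((a:ℝ)+(b:ℝ)) + cw a b q) * Tout q (∅ : Finset (Fin a × Fin b))
        - cw a b q * Tin q (∅ : Finset (Fin a × Fin b)))
      = (if q = z then -cw a b q else 0) := by
    intro q
    rw [hout q, Tin, if_congr (hin q) rfl rfl]
    by_cases hq : q = z <;> simp [hq]
  rw [fS, Finset.sum_congr rfl (fun q _ => hterm q),
    Finset.sum_ite_eq' univ z, if_pos (Finset.mem_univ z)]
  have hcwz : cw a b z = -((a:ℝ) * b) := by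
    have h1 : (z.1.1 : ℝ) = 0 := by norm_num [hz]
    have h2 : (z.2.1 : ℝ) = 0 := by norm_num [hz]
    rw [cw, h1]
    try rw [h2]
    ring
  rw [hcwz]
  ring

lemma fS_ideal (ha : 0 < a) (hb : 0 < b) (I : Finset (Fin a × Fin b)) (hI : IsIdeal I) :
    fS a b I = (a:ℝ) * b := by
  classical
  induction I using Finset.strongInduction with
  | _ I ih =>
    rcases I.eq_empty_or_nonempty with rfl | hne
    · exact fS_empty ha hb
    · obtain ⟨p, hp, hmax⟩ : ∃ p ∈ I, ∀ r ∈ I, ¬ p < r := by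
        obtain ⟨p, hpm⟩ := Finset.exists_maximal hne
        exact ⟨p, hpm.1, fun r hr hlt => hpm.not_gt hr hlt⟩
      rw [step hI hp hmax rfl rfl]
      exact ih _ (Finset.erase_ssubset hp) (isIdeal_erase hI hmax)

end RectAux2

lemma rowmotion_isIdeal {P : Type*} [Fintype P] [PartialOrder P] (I : Finset P) :
    IsIdeal (rowmotion I) := by
  intro x y hxy hy
  rw [rowmotion, Finset.mem_filter] at hy ⊢
  obtain ⟨-, z, hz, hyz⟩ := hy
  exact ⟨Finset.mem_univ _, z, hz, le_trans hxy hyz⟩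

lemma canTogOut_rowmotion {P : Type*} [Fintype P] [PartialOrder P] (I : Finset P) (q : P) :
    CanTogOut (rowmotion I) q ↔ CanTogIn I q := by
  constructor
  · rintro ⟨hq, hm⟩
    rw [rowmotion, Finset.mem_filter] at hq
    obtain ⟨-, y, hy, hqy⟩ := hq
    have hyr : y ∈ rowmotion I := by
      rw [rowmotion, Finset.mem_filter]
      exact ⟨Finset.mem_univ _, y, hy, le_rfl⟩
    rcases eq_or_lt_of_le hqy with rfl | hlt
    · exact hy
    · exact absurd hyr (hm y hlt)
  · intro hq
    refine ⟨?_, ?_⟩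
    · rw [rowmotion, Finset.mem_filter]
      exact ⟨Finset.mem_univ _, q, hq, le_rfl⟩
    · intro r hr hrI
      rw [rowmotion, Finset.mem_filter] at hrI
      obtain ⟨-, y, hy, hry⟩ := hrI
      exact hq.1 (hy.2 q (lt_of_lt_of_le hr hry))

/-- On the rectangle `[a]×[b]`, the antichain cardinality statistic `I ↦ #max(I)` is
`ab/(a+b)` plus a linear combination of signed toggleability statistics; consequently
its average along every rowmotion orbit is `ab/(a+b)`. -/
theorem rect_antichain_card_homomesy (a b : ℕ) (ha : 0 < a) (hb : 0 < b) :
    ∃ c : Fin a × Fin b → ℝ,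
      (∀ I : Finset (Fin a × Fin b), IsIdeal I →
        ((univ.filter fun p : Fin a × Fin b => CanTogOut I p).card : ℝ)
          = (a : ℝ) * b / ((a : ℝ) + b) + ∑ p : Fin a × Fin b, c p * Tsgn p I) ∧
      (∀ I : Finset (Fin a × Fin b), IsIdeal I → ∀ N : ℕ, 0 < N → rowmotion^[N] I = I →
        ∑ k ∈ Finset.range N,
            ((univ.filter fun p : Fin a × Fin b => CanTogOut (rowmotion^[k] I) p).card : ℝ)
          = N * ((a : ℝ) * b / ((a : ℝ) + b))) := by
  classical
  have hD0 : ((a:ℝ) + b) ≠ 0 := by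
    have ha' : (1:ℝ) ≤ (a:ℝ) := by exact_mod_cast ha
    have hb' : (0:ℝ) ≤ (b:ℝ) := Nat.cast_nonneg b
    intro h
    linarith
  refine ⟨fun p => RectAux2.cw a b p / ((a:ℝ) + b), ?_, ?_⟩
  case refine_1 =>
    intro I hI
    have hcard : ((univ.filter fun q : Fin a × Fin b => CanTogOut I q).card : ℝ)
        = ∑ q : Fin a × Fin b, Tout q I := by
      rw [Finset.card_filter]
      push_cast
      exact Finset.sum_congr rfl fun q _ => by rw [Tout]
    have hfs := RectAux2.fS_ideal ha hb I hI
    rw [RectAux2.fS] at hfs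
    have expand : ∑ q : Fin a × Fin b,
        ((((a:ℝ)+(b:ℝ)) + RectAux2.cw a b q) * Tout q I - RectAux2.cw a b q * Tin q I)
        = ((a:ℝ)+(b:ℝ)) * (∑ q : Fin a × Fin b, Tout q I)
          - ∑ q : Fin a × Fin b, RectAux2.cw a b q * Tsgn q I := by
      rw [Finset.mul_sum, ← Finset.sum_sub_distrib]
      exact Finset.sum_congr rfl fun q _ => by rw [Tsgn]; ring
    rw [expand] at hfs
    have hdivsum : ∑ q : Fin a × Fin b, (RectAux2.cw a b q / ((a:ℝ)+b)) * Tsgn q I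
        = (∑ q : Fin a × Fin b, RectAux2.cw a b q * Tsgn q I) / ((a:ℝ)+b) := by
      rw [Finset.sum_div]
      exact Finset.sum_congr rfl fun q _ => by ring
    rw [hcard, hdivsum]
    field_simp
    linarith [hfs]
  case refine_2 =>
    intro I hI N hN hfix
    have part1 : ∀ J : Finset (Fin a × Fin b), IsIdeal J →
        ((univ.filter fun q : Fin a × Fin b => CanTogOut J q).card : ℝ)
          = (a : ℝ) * b / ((a : ℝ) + b)
            + ∑ p : Fin a × Fin b, (RectAux2.cw a b p / ((a:ℝ)+b)) * Tsgn p J := by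
      intro J hJ
      have hcard : ((univ.filter fun q : Fin a × Fin b => CanTogOut J q).card : ℝ)
          = ∑ q : Fin a × Fin b, Tout q J := by
        rw [Finset.card_filter]
        push_cast
        exact Finset.sum_congr rfl fun q _ => by rw [Tout]
      have hfs := RectAux2.fS_ideal ha hb J hJ
      rw [RectAux2.fS] at hfs
      have expand : ∑ q : Fin a × Fin b,
          ((((a:ℝ)+(b:ℝ)) + RectAux2.cw a b q) * Tout q J - RectAux2.cw a b q * Tin q J)
          = ((a:ℝ)+(b:ℝ)) * (∑ q : Fin a × Fin b, Tout q J)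
            - ∑ q : Fin a × Fin b, RectAux2.cw a b q * Tsgn q J := by
        rw [Finset.mul_sum, ← Finset.sum_sub_distrib]
        exact Finset.sum_congr rfl fun q _ => by rw [Tsgn]; ring
      rw [expand] at hfs
      have hdivsum : ∑ q : Fin a × Fin b, (RectAux2.cw a b q / ((a:ℝ)+b)) * Tsgn q J
          = (∑ q : Fin a × Fin b, RectAux2.cw a b q * Tsgn q J) / ((a:ℝ)+b) := by
        rw [Finset.sum_div]
        exact Finset.sum_congr rfl fun q _ => by ring
      rw [hcard, hdivsum]
      field_simp
      linarith [hfs]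
    have hIter : ∀ k : ℕ, IsIdeal (rowmotion^[k] I) := by
      intro k
      cases k with
      | zero => simpa using hI
      | succ n =>
        rw [Function.iterate_succ_apply']
        exact rowmotion_isIdeal _
    have hTT : ∀ (p : Fin a × Fin b) (k : ℕ),
        Tin p (rowmotion^[k] I) = Tout p (rowmotion^[k+1] I) := by
      intro p k
      rw [Function.iterate_succ_apply', Tout, Tin,
        if_congr (canTogOut_rowmotion _ p) rfl rfl]
    set F : ℕ → ℝ :=
      fun k => ∑ p : Fin a × Fin b, (RectAux2.cw a b p / ((a:ℝ)+b)) * Tout p (rowmotion^[k] I)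
      with hF
    have h3 : F N = F 0 := by simp [hF, hfix]
    have hFshift : ∑ k ∈ Finset.range N, F (k+1) = ∑ k ∈ Finset.range N, F k := by
      have h1 := Finset.sum_range_succ' F N
      have h2 := Finset.sum_range_succ F N
      linarith
    rw [Finset.sum_congr rfl (fun k _ => part1 _ (hIter k)), Finset.sum_add_distrib,
      Finset.sum_const, Finset.card_range]
    have hper : ∀ k : ℕ,
        (∑ p : Fin a × Fin b, (RectAux2.cw a b p / ((a:ℝ)+b)) * Tsgn p (rowmotion^[k] I))
          = F (k+1) - F k := by
      intro k
      rw [hF]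
      rw [← Finset.sum_sub_distrib]
      exact Finset.sum_congr rfl fun p _ => by rw [Tsgn, hTT p k]; ring
    rw [Finset.sum_congr rfl (fun k _ => hper k), Finset.sum_sub_distrib, hFshift, sub_self,
      add_zero, nsmul_eq_mul]
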